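/- arXiv:2507.16469 — 3 statements merged into one kernel-verified Lean document; each statement's English description precedes it below -/
import Mathlib

section
/- For every m ≥ 1 and n ≥ 3, there exists a 3-uniform word representing the m×n grid graph Gr_{m,n}; that is, Gr_{m,n} is 3-representable. -/
open SimpleGraph

/-- Two distinct letters `x` and `y` alternate in the word `w` if, in the subsequence of `w`
consisting of all occurrences of `x` and `y`, no two consecutive letters are equal. -/
def Alternate {V : Type*} [DecidableEq V] (w : List V) (x y : V) : Prop :=
  (w.filter fun z => decide (z = x ∨ z = y)).Chain' (· ≠ ·)

/-- A word `w` represents the simple graph `G` if every vertex occurs in `w` and two distinct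
vertices alternate in `w` iff they are adjacent in `G`. -/
def Represents {V : Type*} [DecidableEq V] (w : List V) (G : SimpleGraph V) : Prop :=
  (∀ v : V, v ∈ w) ∧ ∀ x y : V, x ≠ y → (Alternate w x y ↔ G.Adj x y)

/-- A word is `k`-uniform if every letter of the alphabet occurs exactly `k` times in it. -/
def Uniform {V : Type*} [DecidableEq V] (k : ℕ) (w : List V) : Prop :=
  ∀ v : V, w.count v = k

section Aux
variable {V : Type*} [DecidableEq V]

private lemma length_eq_count_add_count {x y : V} (hxy : x ≠ y) :
    ∀ l : List V, (∀ z ∈ l, z = x ∨ z = y) → l.length = l.count x + l.count y := by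
  intro l h
  induction l with
  | nil => simp
  | cons a l ih =>
    have ha := h a (by simp)
    have hl := ih (fun z hz => h z (List.mem_cons_of_mem _ hz))
    rcases ha with rfl | rfl
    · simp [List.count_cons, hxy, hxy.symm, hl]; omega
    · simp [List.count_cons, hxy, hxy.symm, hl]; omega

private lemma filter_pair_eq {r : V → V → Prop} {p : List V} (hp : p.Pairwise r)
    {x y : V} (hxy : x ≠ y) (hx : p.count x = 1) (hy : p.count y = 1) :
    ((p.filter fun z => decide (z = x ∨ z = y)) = [x, y] ∧ r x y) ∨
    ((p.filter fun z => decide (z = x ∨ z = y)) = [y, x] ∧ r y x) := by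
  have hqx : (p.filter fun z => decide (z = x ∨ z = y)).count x = 1 := by
    rw [List.count_filter (by simp)]; exact hx
  have hqy : (p.filter fun z => decide (z = x ∨ z = y)).count y = 1 := by
    rw [List.count_filter (by simp)]; exact hy
  have hmem : ∀ z ∈ (p.filter fun z => decide (z = x ∨ z = y)), z = x ∨ z = y := by
    intro z hz
    simpa using List.of_mem_filter hz
  have hpq : (p.filter fun z => decide (z = x ∨ z = y)).Pairwise r :=
    hp.sublist (List.filter_sublist (l := p))
  have hlen : (p.filter fun z => decide (z = x ∨ z = y)).length = 2 := by
    rw [length_eq_count_add_count hxy _ hmem, hqx, hqy]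
  obtain ⟨a, b, hab⟩ := List.length_eq_two.mp hlen
  rw [hab] at hqx hqy hmem hpq
  have ha := hmem a (by simp)
  have hb := hmem b (by simp)
  have hr : r a b := by
    rw [List.pairwise_cons] at hpq
    exact hpq.1 b (by simp)
  rcases ha with rfl | rfl <;> rcases hb with rfl | rfl
  · exfalso; simp [List.count_cons] at hqx
  · exact Or.inl ⟨hab, hr⟩
  · exact Or.inr ⟨hab, hr⟩
  · exfalso; simp [List.count_cons] at hqy

private lemma chain_iff_blocks {x y : V} (hxy : x ≠ y) {q1 q2 q3 : List V}
    (h1 : q1 = [x, y] ∨ q1 = [y, x]) (h2 : q2 = [x, y] ∨ q2 = [y, x])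
    (h3 : q3 = [x, y] ∨ q3 = [y, x]) :
    (q1 ++ q2 ++ q3).Chain' (· ≠ ·) ↔ (q1 = q2 ∧ q2 = q3) := by
  rcases h1 with rfl | rfl <;> rcases h2 with rfl | rfl <;> rcases h3 with rfl | rfl <;>
    simp [List.Chain', List.isChain_cons_cons, hxy, hxy.symm]

private lemma sort_pairwise (f : V → ℤ) (l : List V) :
    (l.insertionSort fun a b => f a ≤ f b).Pairwise (fun a b => f a ≤ f b) := by
  haveI : IsTotal V fun a b => f a ≤ f b := ⟨fun a b => le_total _ _⟩
  haveI : IsTrans V fun a b => f a ≤ f b := ⟨fun a b c h1 h2 => le_trans h1 h2⟩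
  exact List.pairwise_insertionSort _ l

end Aux

private def gf1 {m n : ℕ} (v : Fin m × Fin n) : ℤ :=
  4 * ((v.1 : ℕ) : ℤ) + 6 * ((v.2 : ℕ) : ℤ) + 7 * ((((v.1 : ℕ) : ℤ) + ((v.2 : ℕ) : ℤ)) % 2)

private def gf2 {m n : ℕ} (v : Fin m × Fin n) : ℤ :=
  4 * ((v.1 : ℕ) : ℤ) - 6 * ((v.2 : ℕ) : ℤ) + 7 * ((((v.1 : ℕ) : ℤ) + ((v.2 : ℕ) : ℤ)) % 2)

private def gf3 {m n : ℕ} (v : Fin m × Fin n) : ℤ :=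
  -2 * ((v.1 : ℕ) : ℤ) + 3 * ((((v.1 : ℕ) : ℤ) + ((v.2 : ℕ) : ℤ)) % 2)

private lemma grid_adj_strict {m n : ℕ} {x y : Fin m × Fin n}
    (h : (pathGraph m □ pathGraph n).Adj x y) :
    (gf1 x < gf1 y ∧ gf2 x < gf2 y ∧ gf3 x < gf3 y) ∨
    (gf1 y < gf1 x ∧ gf2 y < gf2 x ∧ gf3 y < gf3 x) := by
  simp only [boxProd_adj, pathGraph_adj, Fin.ext_iff] at h
  simp only [gf1, gf2, gf3]
  omega

private lemma grid_nonadj_strict {m n : ℕ} {x y : Fin m × Fin n} (hxy : x ≠ y)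
    (h : ¬ (pathGraph m □ pathGraph n).Adj x y) :
    (gf1 x < gf1 y ∨ gf2 x < gf2 y ∨ gf3 x < gf3 y) ∧
    (gf1 y < gf1 x ∨ gf2 y < gf2 x ∨ gf3 y < gf3 x) := by
  have hxy' : ¬((x.1 : ℕ) = (y.1 : ℕ) ∧ (x.2 : ℕ) = (y.2 : ℕ)) := by
    rintro ⟨h1, h2⟩
    exact hxy (Prod.ext (Fin.ext h1) (Fin.ext h2))
  simp only [boxProd_adj, pathGraph_adj, Fin.ext_iff] at h
  push_neg at h
  simp only [gf1, gf2, gf3]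
  omega

/-- For every `m ≥ 1` and `n ≥ 3`, the grid graph `Gr_{m,n} = P_m □ P_n` is `3`-representable. -/
theorem gridGraph_three_representable (m n : ℕ) (hm : 1 ≤ m) (hn : 3 ≤ n) :
    ∃ w : List (Fin m × Fin n), Uniform 3 w ∧ Represents w (pathGraph m □ pathGraph n) := by
  classical
  set V := Fin m × Fin n
  let l : List V := (Finset.univ : Finset V).toList
  have hmeml : ∀ v : V, v ∈ l := fun v => (Finset.mem_toList).mpr (Finset.mem_univ v)
  have hcl : ∀ v : V, @List.count V instBEqOfDecidableEq v l = 1 :=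
    fun v => @List.count_eq_one_of_mem _ instBEqOfDecidableEq _ _ _ (Finset.nodup_toList _) (hmeml v)
  let p1 : List V := l.insertionSort fun a b => gf1 a ≤ gf1 b
  let p2 : List V := l.insertionSort fun a b => gf2 a ≤ gf2 b
  let p3 : List V := l.insertionSort fun a b => gf3 a ≤ gf3 b
  have hc1 : ∀ v : V, @List.count V instBEqOfDecidableEq v p1 = 1 := fun v =>
    ((@List.Perm.count_eq _ instBEqOfDecidableEq _ _ (List.perm_insertionSort _ l) v)).trans (hcl v)
  have hc2 : ∀ v : V, @List.count V instBEqOfDecidableEq v p2 = 1 := fun v =>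
    ((@List.Perm.count_eq _ instBEqOfDecidableEq _ _ (List.perm_insertionSort _ l) v)).trans (hcl v)
  have hc3 : ∀ v : V, @List.count V instBEqOfDecidableEq v p3 = 1 := fun v =>
    ((@List.Perm.count_eq _ instBEqOfDecidableEq _ _ (List.perm_insertionSort _ l) v)).trans (hcl v)
  refine ⟨p1 ++ p2 ++ p3, ?_, ?_, ?_⟩
  · intro v
    simp [List.count_append, hc1 v, hc2 v, hc3 v]
  · intro v
    have : v ∈ p1 := ((List.perm_insertionSort _ l).mem_iff).mpr (hmeml v)
    simp [List.mem_append, this]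
  · intro x y hxy
    have hq1 := filter_pair_eq (sort_pairwise gf1 l) hxy (hc1 x) (hc1 y)
    have hq2 := filter_pair_eq (sort_pairwise gf2 l) hxy (hc2 x) (hc2 y)
    have hq3 := filter_pair_eq (sort_pairwise gf3 l) hxy (hc3 x) (hc3 y)
    have pick : ∀ (q : List V) (u v : ℤ),
        ((q = [x, y] ∧ u ≤ v) ∨ (q = [y, x] ∧ v ≤ u)) →
        (u < v → q = [x, y]) ∧ (v < u → q = [y, x]) := by
      rintro q u v (⟨rfl, h⟩ | ⟨rfl, h⟩) <;> exact ⟨fun hlt => by first | rfl | omega,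
        fun hlt => by first | rfl | omega⟩
    have P1 := pick _ _ _ hq1
    have P2 := pick _ _ _ hq2
    have P3 := pick _ _ _ hq3
    have halt : Alternate (p1 ++ p2 ++ p3) x y ↔
        ((p1.filter fun z => decide (z = x ∨ z = y)) = (p2.filter fun z => decide (z = x ∨ z = y)) ∧
         (p2.filter fun z => decide (z = x ∨ z = y)) = (p3.filter fun z => decide (z = x ∨ z = y))) := by
      unfold Alternate
      rw [List.filter_append, List.filter_append]
      exact chain_iff_blocks hxy (hq1.imp And.left And.left) (hq2.imp And.left And.left)
        (hq3.imp And.left And.left)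
    rw [halt]
    constructor
    · intro ⟨e12, e23⟩
      by_contra hna
      obtain ⟨hs, hs'⟩ := grid_nonadj_strict hxy hna
      have A : (p1.filter fun z => decide (z = x ∨ z = y)) = [x, y] := by
        rcases hs with h | h | h
        · exact P1.1 h
        · rw [e12]; exact P2.1 h
        · rw [e12, e23]; exact P3.1 h
      have B : (p1.filter fun z => decide (z = x ∨ z = y)) = [y, x] := by
        rcases hs' with h | h | h
        · exact P1.2 h
        · rw [e12]; exact P2.2 h
        · rw [e12, e23]; exact P3.2 h
      rw [A] at B
      simp at B
      exact hxy B.1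
    · intro hAdj
      rcases grid_adj_strict hAdj with ⟨h1, h2, h3⟩ | ⟨h1, h2, h3⟩
      · rw [P1.1 h1, P2.1 h2, P3.1 h3]; exact ⟨rfl, rfl⟩
      · rw [P1.2 h1, P2.2 h2, P3.2 h3]; exact ⟨rfl, rfl⟩
end

section
/- For every n ≥ 3, the word W = x_1 x_2 x_1 · (x_3 x_2 x_1) · (x_4 x_3 x_2) · (x_5 x_4 x_3) ⋯ (x_n x_{n−1} x_{n−2}) · x_n x_{n−1} x_n, i.e., the prefix x_1 x_2 x_1 followed by the blocks x_j x_{j−1} x_{j−2} for j = 3, 4, …, n in increasing order of j, followed by the suffix x_n x_{n−1} x_n, is a 3-uniform word that represents the path graph P_n with vertices x_1, …, x_n and edges x_j x_{j+1} for j = 1, …, n−1. -/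
open SimpleGraph

/-- The word over ℕ with letters 1..n. -/
def Wd (n : ℕ) : List ℕ :=
  [1,2,1] ++ (List.range (n-2)).flatMap (fun t => [t+3,t+2,t+1]) ++ [n, n-1, n]

lemma flatMap_range_support {α : Type*} (g : ℕ → List α) (m a c : ℕ) (hacm : a + c ≤ m)
    (h0 : ∀ t, t < a → g t = []) (h1 : ∀ t, a + c ≤ t → t < m → g t = []) :
    (List.range m).flatMap g = (List.range' a c).flatMap g := by
  have e1 : List.range' 0 a ++ List.range' a c = List.range' 0 (c + a) := by
    have := List.range'_append (s := 0) (m := a) (n := c) (step := 1)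
    simpa [Nat.add_comm] using this
  have e2 : List.range' 0 (c+a) ++ List.range' (c+a) (m - (c+a)) = List.range' 0 m := by
    have := List.range'_append (s := 0) (m := c+a) (n := m - (c+a)) (step := 1)
    simpa [show c + a + (m - (c+a)) = m by omega] using this
  have hsplit : List.range m = (List.range' 0 a ++ List.range' a c) ++ List.range' (c+a) (m - (c+a)) := by
    rw [List.range_eq_range', e1, e2]
  rw [hsplit, List.flatMap_append, List.flatMap_append]
  have z0 : (List.range' 0 a).flatMap g = [] := by
    rw [List.flatMap_eq_nil_iff]
    intro t ht
    exact h0 t (by simpa using (List.mem_range'_1.mp ht).2)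
  have z1 : (List.range' (c+a) (m - (c+a))).flatMap g = [] := by
    rw [List.flatMap_eq_nil_iff]
    intro t ht
    have h := List.mem_range'_1.mp ht
    exact h1 t (by omega) (by omega)
  simp [z0, z1]

lemma Wd_step (n : ℕ) (hn : 3 ≤ n) (p : ℕ → Bool) (hp : p (n+1) = false) :
    (Wd (n+1)).filter p = (Wd n).filter p := by
  have h1 : n + 1 - 2 = (n - 2) + 1 := by omega
  unfold Wd
  rw [h1, List.range_succ, List.flatMap_append]
  have h2 : n - 2 + 3 = n + 1 := by omega
  have h3 : n - 2 + 2 = n := by omega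
  have h4 : n - 2 + 1 = n - 1 := by omega
  have h5 : n + 1 - 1 = n := by omega
  simp only [List.flatMap_cons, List.flatMap_nil, h2, h3, h4, h5, List.append_nil]
  simp only [List.append_assoc, List.filter_append]
  congr 2
  cases hpn : p n <;> cases hpn1 : p (n-1) <;>
    simp [List.filter_cons, hp, hpn, hpn1]

lemma Wd_stable (p : ℕ → Bool) (n₀ : ℕ) (h3 : 3 ≤ n₀) (hp : ∀ z, n₀ < z → p z = false) :
    ∀ n, n₀ ≤ n → (Wd n).filter p = (Wd n₀).filter p := by
  intro n hn
  induction n, hn using Nat.le_induction with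
  | base => rfl
  | succ n hn ih => rw [Wd_step n (le_trans h3 hn) p (hp _ (by omega)), ih]

lemma filter_Wd_adj (i : ℕ) (hi : 1 ≤ i) (n : ℕ) (hn : 3 ≤ n) (hin : i + 1 ≤ n) :
    (Wd n).filter (fun z => decide (z = i ∨ z = i + 1)) = [i, i+1, i, i+1, i, i+1] := by
  set p : ℕ → Bool := fun z => decide (z = i ∨ z = i + 1) with hpdef
  rcases Nat.lt_or_ge i 3 with hi3 | hi3
  · -- i = 1 or i = 2 : reduce to n = 3
    have hstab := Wd_stable p 3 (by norm_num)
      (fun z hz => by simp [hpdef]; omega) n hn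
    rw [hstab]
    interval_cases i <;> simp [Wd, hpdef] <;> rfl
  · -- i ≥ 3 : reduce to n = i + 1
    obtain ⟨r, rfl⟩ : ∃ r, i = r + 3 := ⟨i - 3, by omega⟩
    have hstab := Wd_stable p (r + 4) (by omega)
      (fun z hz => by simp [hpdef]; omega) n (by omega)
    rw [hstab]
    have p1 : p (r+3) = true := by simp [hpdef]
    have p2 : p (r+4) = true := by simp [hpdef]
    have p0 : ∀ z, z ≠ r+3 → z ≠ r+4 → p z = false := by
      intro z h1 h2; simp [hpdef]; omega
    unfold Wd
    have hm : r + 4 - 2 = r + 2 := by omega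
    rw [hm, List.filter_append, List.filter_append, List.filter_flatMap]
    have hmid : (List.range (r+2)).flatMap (fun t => List.filter p [t+3,t+2,t+1]) =
        (List.range' r 2).flatMap (fun t => List.filter p [t+3,t+2,t+1]) := by
      apply flatMap_range_support _ _ _ _ (by omega)
      · intro t ht
        simp [List.filter_cons, p0 (t+3) (by omega) (by omega),
          p0 (t+2) (by omega) (by omega), p0 (t+1) (by omega) (by omega)]
      · intro t ht ht2; omega
    rw [hmid]
    have hr2 : List.range' r 2 = [r, r+1] := by simp [List.range'_succ]
    rw [hr2]
    simp only [List.flatMap_cons, List.flatMap_nil, List.append_nil]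
    have e1 : r + 1 + 3 = r + 4 := by omega
    have e2 : r + 1 + 2 = r + 3 := by omega
    have e3 : r + 1 + 1 = r + 2 := by omega
    have e4 : r + 4 - 1 = r + 3 := by omega
    rw [e1, e2, e3, e4]
    simp [List.filter_cons, p1, p2, p0 1 (by omega) (by omega), p0 2 (by omega) (by omega),
      p0 (r+2) (by omega) (by omega), p0 (r+1) (by omega) (by omega)]

lemma filter_Wd_nonadj (i j : ℕ) (hi : 1 ≤ i) (hij : i + 2 ≤ j) (n : ℕ) (hn : 3 ≤ n)
    (hjn : j ≤ n) :
    ∃ l, (Wd n).filter (fun z => decide (z = i ∨ z = j)) = i :: i :: l := by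
  set p : ℕ → Bool := fun z => decide (z = i ∨ z = j) with hpdef
  have hstab := Wd_stable p j (by omega)
    (fun z hz => by simp [hpdef]; omega) n (by omega)
  rw [hstab]
  have pi : p i = true := by simp [hpdef]
  have pj : p j = true := by simp [hpdef]
  have p0 : ∀ z, z ≠ i → z ≠ j → p z = false := by
    intro z h1 h2; simp [hpdef]; omega
  rcases Nat.lt_or_ge i 3 with hi3 | hi3
  · -- i = 1 or i = 2
    interval_cases i
    · -- i = 1 : prefix [1,2,1] filters to [1,1]
      unfold Wd
      simp only [List.filter_append]
      have h1 : List.filter p [1,2,1] = [1,1] := by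
        simp [List.filter_cons, pi, p0 2 (by omega) (by omega)]
      refine ⟨List.filter p ((List.range (j-2)).flatMap fun t => [t+3,t+2,t+1]) ++
        List.filter p [j, j-1, j], ?_⟩
      rw [h1]
      simp
    · -- i = 2 : [1,2,1] ++ block 0 filters to [2,2]
      unfold Wd
      rw [List.range_eq_range', show j - 2 = (j-3)+1 by omega, List.range'_succ]
      simp only [List.flatMap_cons, List.filter_append, Nat.zero_add]
      have h1 : List.filter p [1,2,1] = [2] := by
        simp [List.filter_cons, pi, p0 1 (by omega) (by omega)]
      have h2 : List.filter p [0+3,0+2,0+1] = [2] := by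
        simp [List.filter_cons, pi, p0 1 (by omega) (by omega), p0 3 (by omega) (by omega)]
      refine ⟨List.filter p ((List.range' 1 (j-3)).flatMap fun t => [t+3,t+2,t+1]) ++
        List.filter p [j, j-1, j], ?_⟩
      rw [h1, h2]
      simp
  · -- i ≥ 3
    obtain ⟨r, rfl⟩ : ∃ r, i = r + 3 := ⟨i - 3, by omega⟩
    unfold Wd
    have hsplit : List.range' 0 (j - 2) = List.range' 0 (r+2) ++ List.range' (r+2) (j - 2 - (r+2)) := by
      have h := List.range'_append (s := 0) (m := r+2) (n := j - 2 - (r+2)) (step := 1)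
      simp only [Nat.zero_add, Nat.one_mul] at h
      rw [h]
      congr 1
      omega
    rw [List.range_eq_range', hsplit, List.flatMap_append, ← List.range_eq_range']
    simp only [List.filter_append, List.filter_flatMap]
    have hmid : (List.range (r+2)).flatMap (fun t => List.filter p [t+3,t+2,t+1]) =
        (List.range' r 2).flatMap (fun t => List.filter p [t+3,t+2,t+1]) := by
      apply flatMap_range_support _ _ _ _ (by omega)
      · intro t ht
        simp [List.filter_cons, p0 (t+3) (by omega) (by omega),
          p0 (t+2) (by omega) (by omega), p0 (t+1) (by omega) (by omega)]
      · intro t ht ht2; omega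
    rw [hmid]
    rw [show List.range' r 2 = [r, r+1] by simp [List.range'_succ]]
    simp only [List.flatMap_cons, List.flatMap_nil, List.append_nil]
    have hpre : List.filter p [1,2,1] = [] := by
      simp [List.filter_cons, p0 1 (by omega) (by omega), p0 2 (by omega) (by omega)]
    have hb1 : List.filter p [r+3,r+2,r+1] = [r+3] := by
      simp [List.filter_cons, pi, p0 (r+2) (by omega) (by omega), p0 (r+1) (by omega) (by omega)]
    have hb2 : List.filter p [r+1+3,r+1+2,r+1+1] = [r+3] := by
      simp only [show r+1+3 = r+4 by omega, show r+1+2 = r+3 by omega, show r+1+1 = r+2 by omega]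
      simp [List.filter_cons, pi, p0 (r+4) (by omega) (by omega), p0 (r+2) (by omega) (by omega)]
    refine ⟨((List.range' (r+2) (j - 2 - (r+2))).flatMap fun t => List.filter p [t+3,t+2,t+1]) ++
      List.filter p [j, j-1, j], ?_⟩
    rw [hpre, hb1, hb2]
    simp

/-- For every `n ≥ 3`, the word
`W = x₁x₂x₁ · (x₃x₂x₁)(x₄x₃x₂)⋯(xₙxₙ₋₁xₙ₋₂) · xₙxₙ₋₁xₙ`
is a `3`-uniform word representing the path graph `Pₙ` with vertices `x₁, …, xₙ`
(where `x k` is the vertex of `Fin n` with value `k - 1`). -/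
theorem word_W_represents_pathGraph (n : ℕ) (hn : 3 ≤ n) (x : ℕ → Fin n)
    (hx : ∀ k, 1 ≤ k → k ≤ n → (x k : ℕ) = k - 1) :
    Uniform 3
      ([x 1, x 2, x 1] ++
        ((List.range (n - 2)).flatMap fun t => [x (t + 3), x (t + 2), x (t + 1)]) ++
        [x n, x (n - 1), x n]) ∧
    Represents
      ([x 1, x 2, x 1] ++
        ((List.range (n - 2)).flatMap fun t => [x (t + 3), x (t + 2), x (t + 1)]) ++
        [x n, x (n - 1), x n])
      (pathGraph n) := by
  have hmap : ([x 1, x 2, x 1] ++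
        ((List.range (n - 2)).flatMap fun t => [x (t + 3), x (t + 2), x (t + 1)]) ++
        [x n, x (n - 1), x n]) = (Wd n).map x := by
    simp [Wd, List.map_flatMap]
  rw [hmap]
  have hinj : ∀ k k', 1 ≤ k → k ≤ n → 1 ≤ k' → k' ≤ n → x k = x k' → k = k' := by
    intro k k' h1 h2 h3 h4 h
    have := congrArg Fin.val h
    rw [hx k h1 h2, hx k' h3 h4] at this
    omega
  have hlet : ∀ z ∈ Wd n, 1 ≤ z ∧ z ≤ n := by
    intro z hz
    simp only [Wd, List.mem_append, List.mem_flatMap, List.mem_range, List.mem_cons,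
      List.not_mem_nil, or_false] at hz
    rcases hz with (hz | ⟨t, ht, hz⟩) | hz
    · rcases hz with rfl | rfl | rfl <;> omega
    · rcases hz with rfl | rfl | rfl <;> omega
    · rcases hz with rfl | rfl | rfl <;> omega
  have hfilt : ∀ i j : ℕ, 1 ≤ i → i ≤ n → 1 ≤ j → j ≤ n →
      ((Wd n).map x).filter (fun z => decide (z = x i ∨ z = x j)) =
      ((Wd n).filter (fun z => decide (z = i ∨ z = j))).map x := by
    intro i j h1 h2 h3 h4
    rw [List.filter_map]
    congr 1
    apply List.filter_congr
    intro k hk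
    obtain ⟨hk1, hk2⟩ := hlet k hk
    simp only [Function.comp_apply, decide_eq_decide]
    constructor
    · rintro (h | h)
      · exact Or.inl (hinj k i hk1 hk2 h1 h2 h)
      · exact Or.inr (hinj k j hk1 hk2 h3 h4 h)
    · rintro (rfl | rfl) <;> simp
  have hcomm : ∀ a b : ℕ, (Wd n).filter (fun z => decide (z = a ∨ z = b)) =
      (Wd n).filter (fun z => decide (z = b ∨ z = a)) := by
    intro a b
    apply List.filter_congr
    intro k _
    simp only [decide_eq_decide]
    tauto
  have hcount : ∀ k, 1 ≤ k → k ≤ n → (Wd n).count k = 3 := by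
    intro k h1 h2
    rcases Nat.lt_or_ge k n with hk | hk
    · have hadj := filter_Wd_adj k h1 n hn (by omega)
      have hp : (fun z => decide (z = k ∨ z = k + 1)) k = true := by simp
      have hcf := List.count_filter (p := fun z => decide (z = k ∨ z = k + 1)) (a := k)
        (l := Wd n) hp
      rw [hadj] at hcf
      rw [← hcf]
      simp [List.count_cons, show k ≠ k + 1 by omega]
    · have hkn : k = n := by omega
      have hadj := filter_Wd_adj (n - 1) (by omega) n hn (by omega)
      rw [show n - 1 + 1 = n by omega] at hadj
      have hp : (fun z => decide (z = n - 1 ∨ z = n)) n = true := by simp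
      have hcf := List.count_filter (p := fun z => decide (z = n - 1 ∨ z = n)) (a := n)
        (l := Wd n) hp
      rw [hadj] at hcf
      rw [hkn, ← hcf]
      simp [List.count_cons, show n ≠ n - 1 by omega, show n - 1 ≠ n by omega]
  have huni : Uniform 3 ((Wd n).map x) := by
    intro v
    have hv1 : (v : ℕ) < n := v.isLt
    have hxv : x ((v : ℕ) + 1) = v := by
      apply Fin.ext
      rw [hx _ (by omega) (by omega)]
      omega
    rw [List.count_eq_countP, List.countP_map]
    have hcp : List.countP ((fun z => z == v) ∘ x) (Wd n) =
        List.countP (fun m => m == (v : ℕ) + 1) (Wd n) := by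
      apply List.countP_congr
      intro k hk
      obtain ⟨hk1, hk2⟩ := hlet k hk
      simp only [Function.comp_apply, beq_iff_eq]
      constructor
      · intro h
        exact hinj k ((v : ℕ) + 1) hk1 hk2 (by omega) (by omega) (h.trans hxv.symm)
      · rintro rfl
        exact hxv
    rw [hcp, ← List.count_eq_countP]
    exact hcount _ (by omega) (by omega)
  refine ⟨huni, ?_, ?_⟩
  · intro v
    have := huni v
    exact List.count_pos_iff.mp (by omega)
  · intro u v huv
    have hu1 : (u : ℕ) < n := u.isLt
    have hv1 : (v : ℕ) < n := v.isLt
    have hxu : x ((u : ℕ) + 1) = u := by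
      apply Fin.ext
      rw [hx _ (by omega) (by omega)]
      omega
    have hxv : x ((v : ℕ) + 1) = v := by
      apply Fin.ext
      rw [hx _ (by omega) (by omega)]
      omega
    set i : ℕ := (u : ℕ) + 1 with hidef
    set j : ℕ := (v : ℕ) + 1 with hjdef
    have hij : i ≠ j := by
      intro h
      exact huv (by rw [← hxu, ← hxv, h])
    have hne : x i ≠ x j := by
      rw [hxu, hxv]; exact huv
    rw [SimpleGraph.pathGraph_adj]
    unfold Alternate
    rw [← hxu, ← hxv, hfilt i j (by omega) (by omega) (by omega) (by omega)]
    constructor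
    · intro halt
      by_contra hadj
      push_neg at hadj
      obtain ⟨ha1, ha2⟩ := hadj
      rcases Nat.lt_or_ge i j with h | h
      · have hij2 : i + 2 ≤ j := by omega
        obtain ⟨l, hl⟩ := filter_Wd_nonadj i j (by omega) hij2 n hn (by omega)
        rw [hl] at halt
        simp [List.Chain', List.isChain_cons_cons] at halt
      · have hji2 : j + 2 ≤ i := by omega
        obtain ⟨l, hl⟩ := filter_Wd_nonadj j i (by omega) hji2 n hn (by omega)
        rw [hcomm i j, hl] at halt
        simp [List.Chain', List.isChain_cons_cons] at halt
    · intro hadj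
      rcases hadj with h | h
      · have hj : j = i + 1 := by omega
        rw [hj, filter_Wd_adj i (by omega) n hn (by omega)]
        have hne' : x i ≠ x (i + 1) := by rw [← hj]; exact hne
        simp [List.Chain', List.isChain_cons_cons, hne', hne'.symm]
      · have hi : i = j + 1 := by omega
        rw [hcomm i j, hi, filter_Wd_adj j (by omega) n hn (by omega)]
        have hne' : x j ≠ x (j + 1) := by rw [← hi]; exact hne.symm
        simp [List.Chain', List.isChain_cons_cons, hne', hne'.symm]
end

section
/- For every n ≥ 4, the word Ev = x_1 x_2 ⋯ x_{n−2} x_n x_{n−1} · x_1 x_n · (x_2 x_1) · (x_3 x_2) ⋯ (x_{n−1} x_{n−2}) · x_n x_{n−1}, i.e., the permutation x_1 x_2 ⋯ x_{n−2} x_n x_{n−1}, followed by x_1 x_n, followed by the blocks x_j x_{j−1} for j = 2, 3, …, n−1 in increasing order of j, followed by x_n x_{n−1}, is a 3-uniform word that represents the cycle graph C_n with vertices x_1, …, x_n and edges x_j x_{j+1} for j = 1, …, n−1 together with the edge x_1 x_n. -/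
open SimpleGraph

namespace WordHelp

variable {α : Type*} {β : Type*}

theorem map_eq_flatMap (f : α → β) (l : List α) : l.map f = l.flatMap fun a => [f a] := by
  induction l with
  | nil => rfl
  | cons a l ih => simp [ih]

theorem filter_flatMap' (l : List β) (g : β → List α) (p : α → Bool) :
    (l.flatMap g).filter p = l.flatMap fun a => (g a).filter p := by
  induction l with
  | nil => rfl
  | cons a l ih => simp [List.filter_append, ih]

theorem fm0 (g : ℕ → List α) : ∀ m, (∀ t, t < m → g t = []) → (List.range m).flatMap g = []
  | 0, _ => rfl
  | m+1, h => by
    rw [List.range_succ, List.flatMap_append, fm0 g m (fun t ht => h t (by omega))]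
    simp [h m (by omega)]

theorem fm1 (g : ℕ → List α) (a : ℕ) : ∀ m, a < m → (∀ t, t < m → t ≠ a → g t = []) →
    (List.range m).flatMap g = g a
  | 0, ha, _ => by omega
  | m+1, ha, h => by
    rw [List.range_succ, List.flatMap_append]
    rcases Nat.lt_or_ge a m with h' | h'
    · rw [fm1 g a m h' (fun t ht hta => h t (by omega) hta)]
      simp [h m (by omega) (by omega)]
    · have ham : a = m := by omega
      subst ham
      rw [fm0 g a (fun t ht => h t (by omega) (by omega))]
      simp

theorem fm2 (g : ℕ → List α) (a b : ℕ) : ∀ m, a < b → b < m →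
    (∀ t, t < m → t ≠ a → t ≠ b → g t = []) →
    (List.range m).flatMap g = g a ++ g b
  | 0, _, hb, _ => by omega
  | m+1, hab, hb, h => by
    rw [List.range_succ, List.flatMap_append]
    rcases Nat.lt_or_ge b m with h' | h'
    · rw [fm2 g a b m hab h' (fun t ht h1 h2 => h t (by omega) h1 h2)]
      simp [h m (by omega) (by omega) (by omega)]
    · have hbm : b = m := by omega
      subst hbm
      rw [fm1 g a b (by omega) (fun t ht h1 => h t (by omega) h1 (by omega))]
      simp

theorem fm3 (g : ℕ → List α) (a b c : ℕ) : ∀ m, a < b → b < c → c < m →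
    (∀ t, t < m → t ≠ a → t ≠ b → t ≠ c → g t = []) →
    (List.range m).flatMap g = g a ++ g b ++ g c
  | 0, _, _, hc, _ => by omega
  | m+1, hab, hbc, hc, h => by
    rw [List.range_succ, List.flatMap_append]
    rcases Nat.lt_or_ge c m with h' | h'
    · rw [fm3 g a b c m hab hbc h' (fun t ht h1 h2 h3 => h t (by omega) h1 h2 h3)]
      simp [h m (by omega) (by omega) (by omega) (by omega)]
    · have hcm : c = m := by omega
      subst hcm
      rw [fm2 g a b c hab hbc (fun t ht h1 h2 => h t (by omega) h1 h2 (by omega))]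
      simp

theorem fm4 (g : ℕ → List α) (a b c d : ℕ) : ∀ m, a < b → b < c → c < d → d < m →
    (∀ t, t < m → t ≠ a → t ≠ b → t ≠ c → t ≠ d → g t = []) →
    (List.range m).flatMap g = g a ++ g b ++ g c ++ g d
  | 0, _, _, _, hd, _ => by omega
  | m+1, hab, hbc, hcd, hd, h => by
    rw [List.range_succ, List.flatMap_append]
    rcases Nat.lt_or_ge d m with h' | h'
    · rw [fm4 g a b c d m hab hbc hcd h' (fun t ht h1 h2 h3 h4 => h t (by omega) h1 h2 h3 h4)]
      simp [h m (by omega) (by omega) (by omega) (by omega) (by omega)]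
    · have hdm : d = m := by omega
      subst hdm
      rw [fm3 g a b c d hab hbc hcd (fun t ht h1 h2 h3 => h t (by omega) h1 h2 h3 (by omega))]
      simp

theorem mod_eq_one_iff (n a b : ℕ) (hn : 4 ≤ n) (ha : a < n) (hb : b < n) :
    (n - b + a) % n = 1 ↔ (a = b + 1 ∨ (b = n - 1 ∧ a = 0)) := by
  rcases Nat.lt_or_ge (n - b + a) n with h | h
  · rw [Nat.mod_eq_of_lt h]; omega
  · rw [Nat.mod_eq_sub_mod h, Nat.mod_eq_of_lt (by omega)]; omega

theorem cycle_adj (n : ℕ) (hn : 4 ≤ n) (u v : Fin n) :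
    (SimpleGraph.cycleGraph n).Adj u v ↔
      (u.val + 1 = v.val ∨ v.val + 1 = u.val ∨ (u.val = 0 ∧ v.val = n - 1) ∨
        (v.val = 0 ∧ u.val = n - 1)) := by
  rw [SimpleGraph.cycleGraph_adj', Fin.sub_def, Fin.sub_def]
  show (n - v.val + u.val) % n = 1 ∨ (n - u.val + v.val) % n = 1 ↔ _
  rw [mod_eq_one_iff n _ _ hn u.isLt v.isLt, mod_eq_one_iff n _ _ hn v.isLt u.isLt]
  omega

end WordHelp

theorem alternate_comm {V : Type*} [DecidableEq V] (w : List V) (a b : V) :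
    Alternate w a b ↔ Alternate w b a := by
  unfold Alternate
  rw [show (fun z : V => decide (z = a ∨ z = b)) = fun z => decide (z = b ∨ z = a) from
    funext fun z => decide_eq_decide.mpr or_comm]

/-- For every `n ≥ 4`, the word
`Ev = x₁x₂⋯xₙ₋₂xₙxₙ₋₁ · x₁xₙ · (x₂x₁)(x₃x₂)⋯(xₙ₋₁xₙ₋₂) · xₙxₙ₋₁`
is a `3`-uniform word representing the cycle graph `Cₙ` with vertices `x₁, …, xₙ`
(where `x k` is the vertex of `Fin n` with value `k - 1`). -/
theorem word_Ev_represents_cycleGraph (n : ℕ) (hn : 4 ≤ n) (x : ℕ → Fin n)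
    (hx : ∀ k, 1 ≤ k → k ≤ n → (x k : ℕ) = k - 1) :
    Uniform 3
      ((((List.range (n - 2)).map fun t => x (t + 1)) ++ [x n, x (n - 1)]) ++
        [x 1, x n] ++
        ((List.range (n - 2)).flatMap fun t => [x (t + 2), x (t + 1)]) ++
        [x n, x (n - 1)]) ∧
    Represents
      ((((List.range (n - 2)).map fun t => x (t + 1)) ++ [x n, x (n - 1)]) ++
        [x 1, x n] ++
        ((List.range (n - 2)).flatMap fun t => [x (t + 2), x (t + 1)]) ++
        [x n, x (n - 1)])
      (cycleGraph n) := by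
  have hinj : ∀ j k, 1 ≤ j → j ≤ n → 1 ≤ k → k ≤ n → (x j = x k ↔ j = k) := by
    intro j k hj1 hj2 hk1 hk2
    rw [Fin.ext_iff, hx j hj1 hj2, hx k hk1 hk2]
    omega
  set W : List (Fin n) :=
    ((((List.range (n - 2)).map fun t => x (t + 1)) ++ [x n, x (n - 1)]) ++
        [x 1, x n] ++
        ((List.range (n - 2)).flatMap fun t => [x (t + 2), x (t + 1)]) ++
        [x n, x (n - 1)]) with hWdef
  have hcount : ∀ v : Fin n, W.count v = 3 := by
    intro v
    obtain ⟨a, ha⟩ : ∃ a, a = v.val + 1 := ⟨_, rfl⟩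
    have hvn : v.val < n := v.isLt
    have hxa : x a = v := by
      apply Fin.ext
      rw [hx a (by omega) (by omega)]
      omega
    have hxcast : ∀ j k : ℕ, j = k → x j = x k := fun j k h => congrArg x h
    have hnv : ∀ k, 1 ≤ k → k ≤ n → k ≠ a → x k ≠ v := by
      intro k h1 h2 h3
      rw [← hxa, Ne, hinj k a h1 h2 (by omega) (by omega)]
      exact h3
    have cblock1 : ∀ t, t < n - 2 → t + 1 ≠ a →
        List.filter (fun z => z == v) [x (t + 1)] = [] := by
      intro t ht h1
      simp [List.filter_cons, hnv (t+1) (by omega) (by omega) h1]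
    have cblock2 : ∀ t, t < n - 2 → t + 2 ≠ a → t + 1 ≠ a →
        List.filter (fun z => z == v) [x (t + 2), x (t + 1)] = [] := by
      intro t ht h1 h2
      simp [List.filter_cons, hnv (t+2) (by omega) (by omega) h1,
        hnv (t+1) (by omega) (by omega) h2]
    rw [List.count_eq_countP, List.countP_eq_length_filter]
    by_cases ha1 : a = 1
    · -- count: a = 1
      have hF : List.filter (fun z => z == v) W = [v, v, v] := by
        rw [hWdef, WordHelp.map_eq_flatMap]
        simp only [List.filter_append]
        rw [WordHelp.filter_flatMap', WordHelp.filter_flatMap',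
          WordHelp.fm1 (fun t => List.filter (fun z => z == v) [x (t + 1)]) (0) (n - 2) (by omega) (fun t ht h1 => cblock1 t ht (by omega)),
          WordHelp.fm1 (fun t => List.filter (fun z => z == v) [x (t + 2), x (t + 1)]) (0) (n - 2) (by omega) (fun t ht h1 => cblock2 t ht (by omega) (by omega))]
        simp [List.filter_cons,
          hxa,
          show x (1) = v from (hxcast (1) a (by omega)).trans hxa,
          hnv (2) (by omega) (by omega) (by omega),
          hnv (n - 1) (by omega) (by omega) (by omega),
          hnv (n) (by omega) (by omega) (by omega)]
      rw [hF]
      rfl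
    · by_cases ha2 : a ≤ n - 2
      · -- count: 2 ≤ a ≤ n-2
        have hF : List.filter (fun z => z == v) W = [v, v, v] := by
          rw [hWdef, WordHelp.map_eq_flatMap]
          simp only [List.filter_append]
          rw [WordHelp.filter_flatMap', WordHelp.filter_flatMap',
            WordHelp.fm1 (fun t => List.filter (fun z => z == v) [x (t + 1)]) (a - 1) (n - 2) (by omega) (fun t ht h1 => cblock1 t ht (by omega)),
            WordHelp.fm2 (fun t => List.filter (fun z => z == v) [x (t + 2), x (t + 1)]) (a - 2) (a - 1) (n - 2) (by omega) (by omega) (fun t ht h1 h2 => cblock2 t ht (by omega) (by omega))]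
          simp [List.filter_cons,
            show a - 1 + 1 = a from by omega,
            show a - 2 + 2 = a from by omega,
            show a - 2 + 1 = a - 1 from by omega,
            show a - 1 + 2 = a + 1 from by omega,
            hxa,
            hnv (1) (by omega) (by omega) (by omega),
            hnv (a - 1) (by omega) (by omega) (by omega),
            hnv (a + 1) (by omega) (by omega) (by omega),
            hnv (n - 1) (by omega) (by omega) (by omega),
            hnv (n) (by omega) (by omega) (by omega)]
        rw [hF]
        rfl
      · by_cases ha3 : a = n - 1
        · -- count: a = n-1
          have hF : List.filter (fun z => z == v) W = [v, v, v] := by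
            rw [hWdef, WordHelp.map_eq_flatMap]
            simp only [List.filter_append]
            rw [WordHelp.filter_flatMap', WordHelp.filter_flatMap',
              WordHelp.fm0 (fun t => List.filter (fun z => z == v) [x (t + 1)]) (n - 2) (fun t ht => cblock1 t ht (by omega)),
              WordHelp.fm1 (fun t => List.filter (fun z => z == v) [x (t + 2), x (t + 1)]) (n - 3) (n - 2) (by omega) (fun t ht h1 => cblock2 t ht (by omega) (by omega))]
            simp [List.filter_cons,
              show n - 3 + 2 = n - 1 from by omega,
              show n - 3 + 1 = n - 2 from by omega,
              hxa,
              show x (n - 1) = v from (hxcast (n - 1) a (by omega)).trans hxa,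
              hnv (1) (by omega) (by omega) (by omega),
              hnv (n - 2) (by omega) (by omega) (by omega),
              hnv (n) (by omega) (by omega) (by omega)]
          rw [hF]
          rfl
        · have han : a = n := by omega
          -- count: a = n
          have hF : List.filter (fun z => z == v) W = [v, v, v] := by
            rw [hWdef, WordHelp.map_eq_flatMap]
            simp only [List.filter_append]
            rw [WordHelp.filter_flatMap', WordHelp.filter_flatMap',
              WordHelp.fm0 (fun t => List.filter (fun z => z == v) [x (t + 1)]) (n - 2) (fun t ht => cblock1 t ht (by omega)),
              WordHelp.fm0 (fun t => List.filter (fun z => z == v) [x (t + 2), x (t + 1)]) (n - 2) (fun t ht => cblock2 t ht (by omega) (by omega))]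
            simp [List.filter_cons,
              hxa,
              show x (n) = v from (hxcast (n) a (by omega)).trans hxa,
              hnv (1) (by omega) (by omega) (by omega),
              hnv (n - 1) (by omega) (by omega) (by omega)]
          rw [hF]
          rfl
  have main : ∀ u v : Fin n, u.val < v.val →
      ((List.filter (fun z => decide (z = u ∨ z = v)) W).Chain' (· ≠ ·) ↔
        (SimpleGraph.cycleGraph n).Adj u v) := by
    intro u v hlt
    obtain ⟨a, ha⟩ : ∃ a, a = u.val + 1 := ⟨_, rfl⟩
    obtain ⟨b, hb⟩ : ∃ b, b = v.val + 1 := ⟨_, rfl⟩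
    have hun : u.val < n := u.isLt
    have hvn : v.val < n := v.isLt
    have hxa : x a = u := by
      apply Fin.ext
      rw [hx a (by omega) (by omega)]
      omega
    have hxb : x b = v := by
      apply Fin.ext
      rw [hx b (by omega) (by omega)]
      omega
    have hxcast : ∀ j k : ℕ, j = k → x j = x k := fun j k h => congrArg x h
    have hnu : ∀ k, 1 ≤ k → k ≤ n → k ≠ a → x k ≠ u := by
      intro k h1 h2 h3
      rw [← hxa, Ne, hinj k a h1 h2 (by omega) (by omega)]
      exact h3
    have hnv : ∀ k, 1 ≤ k → k ≤ n → k ≠ b → x k ≠ v := by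
      intro k h1 h2 h3
      rw [← hxb, Ne, hinj k b h1 h2 (by omega) (by omega)]
      exact h3
    have hne : u ≠ v := by
      rw [← hxa, ← hxb, Ne, hinj a b (by omega) (by omega) (by omega) (by omega)]
      omega
    have hblock1 : ∀ t, t < n - 2 → t + 1 ≠ a → t + 1 ≠ b →
        List.filter (fun z => decide (z = u ∨ z = v)) [x (t + 1)] = [] := by
      intro t ht h1 h2
      simp [List.filter_cons, hnu (t+1) (by omega) (by omega) h1,
        hnv (t+1) (by omega) (by omega) h2]
    have hblock2 : ∀ t, t < n - 2 → t + 2 ≠ a → t + 2 ≠ b → t + 1 ≠ a → t + 1 ≠ b →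
        List.filter (fun z => decide (z = u ∨ z = v)) [x (t + 2), x (t + 1)] = [] := by
      intro t ht h1 h2 h3 h4
      simp [List.filter_cons, hnu (t+2) (by omega) (by omega) h1,
        hnv (t+2) (by omega) (by omega) h2, hnu (t+1) (by omega) (by omega) h3,
        hnv (t+1) (by omega) (by omega) h4]
    by_cases hb2 : b ≤ n - 2
    · by_cases hba : b = a + 1
      · by_cases ha1 : a = 1
        · -- case 2: a = 1, b = 2
          have hW : List.filter (fun z => decide (z = u ∨ z = v)) W = [u, v, u, v, u, v] := by
            rw [hWdef, WordHelp.map_eq_flatMap]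
            simp only [List.filter_append]
            rw [WordHelp.filter_flatMap', WordHelp.filter_flatMap',
              WordHelp.fm2 (fun t => List.filter (fun z => decide (z = u ∨ z = v)) [x (t + 1)]) (0) (1) (n - 2) (by omega) (by omega) (fun t ht h1 h2 => hblock1 t ht (by omega) (by omega)),
              WordHelp.fm2 (fun t => List.filter (fun z => decide (z = u ∨ z = v)) [x (t + 2), x (t + 1)]) (0) (1) (n - 2) (by omega) (by omega) (fun t ht h1 h2 => hblock2 t ht (by omega) (by omega) (by omega) (by omega))]
            simp [List.filter_cons,
              hxa,
              hxb,
              show x (1) = u from (hxcast (1) a (by omega)).trans hxa,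
              show x (2) = v from (hxcast (2) b (by omega)).trans hxb,
              hnu (3) (by omega) (by omega) (by omega),
              hnv (3) (by omega) (by omega) (by omega),
              hnu (n - 1) (by omega) (by omega) (by omega),
              hnv (n - 1) (by omega) (by omega) (by omega),
              hnu (n) (by omega) (by omega) (by omega),
              hnv (n) (by omega) (by omega) (by omega)]
          rw [hW]
          exact iff_of_true (by simp [List.Chain', List.isChain_cons_cons, List.isChain_singleton, hne, Ne.symm hne])
            (by rw [WordHelp.cycle_adj n hn u v]; omega)
        · -- case 1: 2 ≤ a, b = a+1, b ≤ n-2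
          have hW : List.filter (fun z => decide (z = u ∨ z = v)) W = [u, v, u, v, u, v] := by
            rw [hWdef, WordHelp.map_eq_flatMap]
            simp only [List.filter_append]
            rw [WordHelp.filter_flatMap', WordHelp.filter_flatMap',
              WordHelp.fm2 (fun t => List.filter (fun z => decide (z = u ∨ z = v)) [x (t + 1)]) (a - 1) (b - 1) (n - 2) (by omega) (by omega) (fun t ht h1 h2 => hblock1 t ht (by omega) (by omega)),
              WordHelp.fm3 (fun t => List.filter (fun z => decide (z = u ∨ z = v)) [x (t + 2), x (t + 1)]) (a - 2) (a - 1) (a) (n - 2) (by omega) (by omega) (by omega) (fun t ht h1 h2 h3 => hblock2 t ht (by omega) (by omega) (by omega) (by omega))]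
            simp [List.filter_cons,
              show a - 1 + 1 = a from by omega,
              show b - 1 + 1 = b from by omega,
              show a - 2 + 2 = a from by omega,
              show a - 2 + 1 = a - 1 from by omega,
              show a - 1 + 2 = b from by omega,
              show a + 1 = b from by omega,
              hxa,
              hxb,
              hnu (1) (by omega) (by omega) (by omega),
              hnv (1) (by omega) (by omega) (by omega),
              hnu (a - 1) (by omega) (by omega) (by omega),
              hnv (a - 1) (by omega) (by omega) (by omega),
              hnu (a + 2) (by omega) (by omega) (by omega),
              hnv (a + 2) (by omega) (by omega) (by omega),
              hnu (n - 1) (by omega) (by omega) (by omega),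
              hnv (n - 1) (by omega) (by omega) (by omega),
              hnu (n) (by omega) (by omega) (by omega),
              hnv (n) (by omega) (by omega) (by omega)]
          rw [hW]
          exact iff_of_true (by simp [List.Chain', List.isChain_cons_cons, List.isChain_singleton, hne, Ne.symm hne])
            (by rw [WordHelp.cycle_adj n hn u v]; omega)
      · by_cases ha1 : a = 1
        · -- case 4: a = 1, 3 ≤ b ≤ n-2
          have hW : List.filter (fun z => decide (z = u ∨ z = v)) W = [u, v, u, u, v, v] := by
            rw [hWdef, WordHelp.map_eq_flatMap]
            simp only [List.filter_append]
            rw [WordHelp.filter_flatMap', WordHelp.filter_flatMap',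
              WordHelp.fm2 (fun t => List.filter (fun z => decide (z = u ∨ z = v)) [x (t + 1)]) (0) (b - 1) (n - 2) (by omega) (by omega) (fun t ht h1 h2 => hblock1 t ht (by omega) (by omega)),
              WordHelp.fm3 (fun t => List.filter (fun z => decide (z = u ∨ z = v)) [x (t + 2), x (t + 1)]) (0) (b - 2) (b - 1) (n - 2) (by omega) (by omega) (by omega) (fun t ht h1 h2 h3 => hblock2 t ht (by omega) (by omega) (by omega) (by omega))]
            simp [List.filter_cons,
              show b - 1 + 1 = b from by omega,
              show b - 2 + 2 = b from by omega,
              show b - 2 + 1 = b - 1 from by omega,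
              show b - 1 + 2 = b + 1 from by omega,
              hxa,
              hxb,
              show x (1) = u from (hxcast (1) a (by omega)).trans hxa,
              hnu (2) (by omega) (by omega) (by omega),
              hnv (2) (by omega) (by omega) (by omega),
              hnu (b - 1) (by omega) (by omega) (by omega),
              hnv (b - 1) (by omega) (by omega) (by omega),
              hnu (b + 1) (by omega) (by omega) (by omega),
              hnv (b + 1) (by omega) (by omega) (by omega),
              hnu (n - 1) (by omega) (by omega) (by omega),
              hnv (n - 1) (by omega) (by omega) (by omega),
              hnu (n) (by omega) (by omega) (by omega),
              hnv (n) (by omega) (by omega) (by omega)]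
          rw [hW]
          exact iff_of_false (by simp [List.Chain', List.isChain_cons_cons, List.isChain_singleton])
            (by rw [WordHelp.cycle_adj n hn u v]; omega)
        · -- case 3: 2 ≤ a, a+2 ≤ b ≤ n-2
          have hW : List.filter (fun z => decide (z = u ∨ z = v)) W = [u, v, u, u, v, v] := by
            rw [hWdef, WordHelp.map_eq_flatMap]
            simp only [List.filter_append]
            rw [WordHelp.filter_flatMap', WordHelp.filter_flatMap',
              WordHelp.fm2 (fun t => List.filter (fun z => decide (z = u ∨ z = v)) [x (t + 1)]) (a - 1) (b - 1) (n - 2) (by omega) (by omega) (fun t ht h1 h2 => hblock1 t ht (by omega) (by omega)),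
              WordHelp.fm4 (fun t => List.filter (fun z => decide (z = u ∨ z = v)) [x (t + 2), x (t + 1)]) (a - 2) (a - 1) (b - 2) (b - 1) (n - 2) (by omega) (by omega) (by omega) (by omega) (fun t ht h1 h2 h3 h4 => hblock2 t ht (by omega) (by omega) (by omega) (by omega))]
            simp [List.filter_cons,
              show a - 1 + 1 = a from by omega,
              show a - 2 + 2 = a from by omega,
              show a - 2 + 1 = a - 1 from by omega,
              show a - 1 + 2 = a + 1 from by omega,
              show b - 1 + 1 = b from by omega,
              show b - 2 + 2 = b from by omega,
              show b - 2 + 1 = b - 1 from by omega,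
              show b - 1 + 2 = b + 1 from by omega,
              hxa,
              hxb,
              hnu (1) (by omega) (by omega) (by omega),
              hnv (1) (by omega) (by omega) (by omega),
              hnu (a - 1) (by omega) (by omega) (by omega),
              hnv (a - 1) (by omega) (by omega) (by omega),
              hnu (a + 1) (by omega) (by omega) (by omega),
              hnv (a + 1) (by omega) (by omega) (by omega),
              hnu (b - 1) (by omega) (by omega) (by omega),
              hnv (b - 1) (by omega) (by omega) (by omega),
              hnu (b + 1) (by omega) (by omega) (by omega),
              hnv (b + 1) (by omega) (by omega) (by omega),
              hnu (n - 1) (by omega) (by omega) (by omega),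
              hnv (n - 1) (by omega) (by omega) (by omega),
              hnu (n) (by omega) (by omega) (by omega),
              hnv (n) (by omega) (by omega) (by omega)]
          rw [hW]
          exact iff_of_false (by simp [List.Chain', List.isChain_cons_cons, List.isChain_singleton])
            (by rw [WordHelp.cycle_adj n hn u v]; omega)
    · by_cases hbn1 : b = n - 1
      · by_cases ha2 : a = n - 2
        · -- case 5: a = n-2, b = n-1
          have hW : List.filter (fun z => decide (z = u ∨ z = v)) W = [u, v, u, v, u, v] := by
            rw [hWdef, WordHelp.map_eq_flatMap]
            simp only [List.filter_append]
            rw [WordHelp.filter_flatMap', WordHelp.filter_flatMap',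
              WordHelp.fm1 (fun t => List.filter (fun z => decide (z = u ∨ z = v)) [x (t + 1)]) (a - 1) (n - 2) (by omega) (fun t ht h1 => hblock1 t ht (by omega) (by omega)),
              WordHelp.fm2 (fun t => List.filter (fun z => decide (z = u ∨ z = v)) [x (t + 2), x (t + 1)]) (a - 2) (a - 1) (n - 2) (by omega) (by omega) (fun t ht h1 h2 => hblock2 t ht (by omega) (by omega) (by omega) (by omega))]
            simp [List.filter_cons,
              show a - 1 + 1 = a from by omega,
              show a - 2 + 2 = a from by omega,
              show a - 2 + 1 = a - 1 from by omega,
              show a - 1 + 2 = b from by omega,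
              hxa,
              hxb,
              show x (n - 1) = v from (hxcast (n - 1) b (by omega)).trans hxb,
              hnu (1) (by omega) (by omega) (by omega),
              hnv (1) (by omega) (by omega) (by omega),
              hnu (a - 1) (by omega) (by omega) (by omega),
              hnv (a - 1) (by omega) (by omega) (by omega),
              hnu (n) (by omega) (by omega) (by omega),
              hnv (n) (by omega) (by omega) (by omega)]
          rw [hW]
          exact iff_of_true (by simp [List.Chain', List.isChain_cons_cons, List.isChain_singleton, hne, Ne.symm hne])
            (by rw [WordHelp.cycle_adj n hn u v]; omega)
        · by_cases ha1 : a = 1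
          · -- case 7: a = 1, b = n-1
            have hW : List.filter (fun z => decide (z = u ∨ z = v)) W = [u, v, u, u, v, v] := by
              rw [hWdef, WordHelp.map_eq_flatMap]
              simp only [List.filter_append]
              rw [WordHelp.filter_flatMap', WordHelp.filter_flatMap',
                WordHelp.fm1 (fun t => List.filter (fun z => decide (z = u ∨ z = v)) [x (t + 1)]) (0) (n - 2) (by omega) (fun t ht h1 => hblock1 t ht (by omega) (by omega)),
                WordHelp.fm2 (fun t => List.filter (fun z => decide (z = u ∨ z = v)) [x (t + 2), x (t + 1)]) (0) (n - 3) (n - 2) (by omega) (by omega) (fun t ht h1 h2 => hblock2 t ht (by omega) (by omega) (by omega) (by omega))]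
              simp [List.filter_cons,
                show n - 3 + 2 = n - 1 from by omega,
                show n - 3 + 1 = n - 2 from by omega,
                hxa,
                hxb,
                show x (1) = u from (hxcast (1) a (by omega)).trans hxa,
                show x (n - 1) = v from (hxcast (n - 1) b (by omega)).trans hxb,
                hnu (2) (by omega) (by omega) (by omega),
                hnv (2) (by omega) (by omega) (by omega),
                hnu (n - 2) (by omega) (by omega) (by omega),
                hnv (n - 2) (by omega) (by omega) (by omega),
                hnu (n) (by omega) (by omega) (by omega),
                hnv (n) (by omega) (by omega) (by omega)]
            rw [hW]
            exact iff_of_false (by simp [List.Chain', List.isChain_cons_cons, List.isChain_singleton])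
              (by rw [WordHelp.cycle_adj n hn u v]; omega)
          · -- case 6: 2 ≤ a ≤ n-3, b = n-1
            have hW : List.filter (fun z => decide (z = u ∨ z = v)) W = [u, v, u, u, v, v] := by
              rw [hWdef, WordHelp.map_eq_flatMap]
              simp only [List.filter_append]
              rw [WordHelp.filter_flatMap', WordHelp.filter_flatMap',
                WordHelp.fm1 (fun t => List.filter (fun z => decide (z = u ∨ z = v)) [x (t + 1)]) (a - 1) (n - 2) (by omega) (fun t ht h1 => hblock1 t ht (by omega) (by omega)),
                WordHelp.fm3 (fun t => List.filter (fun z => decide (z = u ∨ z = v)) [x (t + 2), x (t + 1)]) (a - 2) (a - 1) (n - 3) (n - 2) (by omega) (by omega) (by omega) (fun t ht h1 h2 h3 => hblock2 t ht (by omega) (by omega) (by omega) (by omega))]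
              simp [List.filter_cons,
                show a - 1 + 1 = a from by omega,
                show a - 2 + 2 = a from by omega,
                show a - 2 + 1 = a - 1 from by omega,
                show a - 1 + 2 = a + 1 from by omega,
                show n - 3 + 2 = n - 1 from by omega,
                show n - 3 + 1 = n - 2 from by omega,
                hxa,
                hxb,
                show x (n - 1) = v from (hxcast (n - 1) b (by omega)).trans hxb,
                hnu (1) (by omega) (by omega) (by omega),
                hnv (1) (by omega) (by omega) (by omega),
                hnu (a - 1) (by omega) (by omega) (by omega),
                hnv (a - 1) (by omega) (by omega) (by omega),
                hnu (a + 1) (by omega) (by omega) (by omega),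
                hnv (a + 1) (by omega) (by omega) (by omega),
                hnu (n - 2) (by omega) (by omega) (by omega),
                hnv (n - 2) (by omega) (by omega) (by omega),
                hnu (n) (by omega) (by omega) (by omega),
                hnv (n) (by omega) (by omega) (by omega)]
            rw [hW]
            exact iff_of_false (by simp [List.Chain', List.isChain_cons_cons, List.isChain_singleton])
              (by rw [WordHelp.cycle_adj n hn u v]; omega)
      · have hbn' : b = n := by omega
        by_cases ha1 : a = 1
        · -- case 8: a = 1, b = n
          have hW : List.filter (fun z => decide (z = u ∨ z = v)) W = [u, v, u, v, u, v] := by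
            rw [hWdef, WordHelp.map_eq_flatMap]
            simp only [List.filter_append]
            rw [WordHelp.filter_flatMap', WordHelp.filter_flatMap',
              WordHelp.fm1 (fun t => List.filter (fun z => decide (z = u ∨ z = v)) [x (t + 1)]) (0) (n - 2) (by omega) (fun t ht h1 => hblock1 t ht (by omega) (by omega)),
              WordHelp.fm1 (fun t => List.filter (fun z => decide (z = u ∨ z = v)) [x (t + 2), x (t + 1)]) (0) (n - 2) (by omega) (fun t ht h1 => hblock2 t ht (by omega) (by omega) (by omega) (by omega))]
            simp [List.filter_cons,
              hxa,
              hxb,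
              show x (1) = u from (hxcast (1) a (by omega)).trans hxa,
              show x (n) = v from (hxcast (n) b (by omega)).trans hxb,
              hnu (2) (by omega) (by omega) (by omega),
              hnv (2) (by omega) (by omega) (by omega),
              hnu (n - 1) (by omega) (by omega) (by omega),
              hnv (n - 1) (by omega) (by omega) (by omega)]
          rw [hW]
          exact iff_of_true (by simp [List.Chain', List.isChain_cons_cons, List.isChain_singleton, hne, Ne.symm hne])
            (by rw [WordHelp.cycle_adj n hn u v]; omega)
        · by_cases han1 : a = n - 1
          · -- case 10: a = n-1, b = n
            have hW : List.filter (fun z => decide (z = u ∨ z = v)) W = [v, u, v, u, v, u] := by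
              rw [hWdef, WordHelp.map_eq_flatMap]
              simp only [List.filter_append]
              rw [WordHelp.filter_flatMap', WordHelp.filter_flatMap',
                WordHelp.fm0 (fun t => List.filter (fun z => decide (z = u ∨ z = v)) [x (t + 1)]) (n - 2) (fun t ht => hblock1 t ht (by omega) (by omega)),
                WordHelp.fm1 (fun t => List.filter (fun z => decide (z = u ∨ z = v)) [x (t + 2), x (t + 1)]) (n - 3) (n - 2) (by omega) (fun t ht h1 => hblock2 t ht (by omega) (by omega) (by omega) (by omega))]
              simp [List.filter_cons,
                show n - 3 + 2 = n - 1 from by omega,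
                show n - 3 + 1 = n - 2 from by omega,
                hxa,
                hxb,
                show x (n - 1) = u from (hxcast (n - 1) a (by omega)).trans hxa,
                show x (n) = v from (hxcast (n) b (by omega)).trans hxb,
                hnu (1) (by omega) (by omega) (by omega),
                hnv (1) (by omega) (by omega) (by omega),
                hnu (n - 2) (by omega) (by omega) (by omega),
                hnv (n - 2) (by omega) (by omega) (by omega)]
            rw [hW]
            exact iff_of_true (by simp [List.Chain', List.isChain_cons_cons, List.isChain_singleton, hne, Ne.symm hne])
              (by rw [WordHelp.cycle_adj n hn u v]; omega)
          · -- case 9: 2 ≤ a ≤ n-2, b = n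
            have hW : List.filter (fun z => decide (z = u ∨ z = v)) W = [u, v, v, u, u, v] := by
              rw [hWdef, WordHelp.map_eq_flatMap]
              simp only [List.filter_append]
              rw [WordHelp.filter_flatMap', WordHelp.filter_flatMap',
                WordHelp.fm1 (fun t => List.filter (fun z => decide (z = u ∨ z = v)) [x (t + 1)]) (a - 1) (n - 2) (by omega) (fun t ht h1 => hblock1 t ht (by omega) (by omega)),
                WordHelp.fm2 (fun t => List.filter (fun z => decide (z = u ∨ z = v)) [x (t + 2), x (t + 1)]) (a - 2) (a - 1) (n - 2) (by omega) (by omega) (fun t ht h1 h2 => hblock2 t ht (by omega) (by omega) (by omega) (by omega))]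
              simp [List.filter_cons,
                show a - 1 + 1 = a from by omega,
                show a - 2 + 2 = a from by omega,
                show a - 2 + 1 = a - 1 from by omega,
                show a - 1 + 2 = a + 1 from by omega,
                hxa,
                hxb,
                show x (n) = v from (hxcast (n) b (by omega)).trans hxb,
                hnu (1) (by omega) (by omega) (by omega),
                hnv (1) (by omega) (by omega) (by omega),
                hnu (a - 1) (by omega) (by omega) (by omega),
                hnv (a - 1) (by omega) (by omega) (by omega),
                hnu (a + 1) (by omega) (by omega) (by omega),
                hnv (a + 1) (by omega) (by omega) (by omega),
                hnu (n - 1) (by omega) (by omega) (by omega),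
                hnv (n - 1) (by omega) (by omega) (by omega)]
            rw [hW]
            exact iff_of_false (by simp [List.Chain', List.isChain_cons_cons, List.isChain_singleton])
              (by rw [WordHelp.cycle_adj n hn u v]; omega)
  constructor
  · show ∀ v : Fin n, W.count v = 3
    exact hcount
  · show (∀ v : Fin n, v ∈ W) ∧ ∀ y z : Fin n, y ≠ z →
      (Alternate W y z ↔ (SimpleGraph.cycleGraph n).Adj y z)
    constructor
    · intro v
      exact List.count_pos_iff.mp (by rw [hcount v]; omega)
    · intro u v huv
      rcases Nat.lt_trichotomy u.val v.val with h | h | h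
      · exact main u v h
      · exact absurd (Fin.ext h) huv
      · rw [alternate_comm, (SimpleGraph.cycleGraph n).adj_comm]
        exact main v u h
end
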